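/- Let r(z₁,z₂,z₃) = Re(z₁) + |z₂|²·Re(z₂² − z₃³) + |z₃|²·Re(z₃²) − Re(z₂²·conj(z₃)). Suppose γ(t) = (0, γ²(t), γ³(t)) is holomorphic with γ(0) = 0, (γ²)'(0) ≠ 0, and (γ³)'(0) = 0. Then the coefficient of t³·conj(t) in the Taylor expansion of r∘γ at 0 is nonzero; in particular r∘γ vanishes to order at most 4 at 0. -/

import Mathlib

open Complex Filter Topology

/-- Wirtinger derivative ∂/∂t of a function of one complex variable. -/
noncomputable def wd (f : ℂ → ℂ) : ℂ → ℂ := fun t =>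
  (fderiv ℝ f t 1 - Complex.I * fderiv ℝ f t Complex.I) / 2

/-- Wirtinger derivative ∂/∂t̄ of a function of one complex variable. -/
noncomputable def wdbar (f : ℂ → ℂ) : ℂ → ℂ := fun t =>
  (fderiv ℝ f t 1 + Complex.I * fderiv ℝ f t Complex.I) / 2

/-- D^{a,b}[f] = (∂/∂t)^a (∂/∂t̄)^b f. -/
noncomputable def Dab (a b : ℕ) (f : ℂ → ℂ) : ℂ → ℂ := wd^[a] (wdbar^[b] f)

noncomputable def rDef (z₁ z₂ z₃ : ℂ) : ℝ :=
  z₁.re + ‖z₂‖ ^ 2 * (z₂ ^ 2 - z₃ ^ 3).re + ‖z₃‖ ^ 2 * (z₃ ^ 2).re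
    - (z₂ ^ 2 * (starRingEnd ℂ) z₃).re

lemma hasFDerivAt_term (c : ℂ) (g h : ℂ → ℂ) (t : ℂ)
    (hg : DifferentiableAt ℂ g t) (hh : DifferentiableAt ℂ h t) :
    HasFDerivAt (fun s => c * (g s * (starRingEnd ℂ) (h s)))
      (c • ((g t • ((conjCLE : ℂ ≃L[ℝ] ℂ).toContinuousLinearMap ∘L ((fderiv ℂ h t).restrictScalars ℝ))) +
        ((starRingEnd ℂ) (h t) • ((fderiv ℂ g t).restrictScalars ℝ)))) t := by
  have Hg : HasFDerivAt g ((fderiv ℂ g t).restrictScalars ℝ) t :=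
    (hg.hasFDerivAt).restrictScalars ℝ
  have Hh : HasFDerivAt (fun s => (starRingEnd ℂ) (h s))
      ((conjCLE : ℂ ≃L[ℝ] ℂ).toContinuousLinearMap ∘L ((fderiv ℂ h t).restrictScalars ℝ)) t :=
    ((conjCLE : ℂ ≃L[ℝ] ℂ).toContinuousLinearMap.hasFDerivAt).comp t
      ((hh.hasFDerivAt).restrictScalars ℝ)
  exact (Hg.mul Hh).const_mul c

lemma clm_apply_eq (L : ℂ →L[ℂ] ℂ) (w : ℂ) : L w = w * L 1 := by
  conv_lhs => rw [show w = w • (1:ℂ) by simp]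
  rw [map_smul]; simp

lemma wd_term (c : ℂ) (g h : ℂ → ℂ) (t : ℂ)
    (hg : DifferentiableAt ℂ g t) (hh : DifferentiableAt ℂ h t) :
    wd (fun s => c * (g s * (starRingEnd ℂ) (h s))) t
      = c * (deriv g t * (starRingEnd ℂ) (h t)) := by
  have H := (hasFDerivAt_term c g h t hg hh).fderiv
  simp only [wd, H]
  simp only [ContinuousLinearMap.smul_apply, ContinuousLinearMap.add_apply,
    ContinuousLinearMap.comp_apply, ContinuousLinearMap.coe_restrictScalars',
    ContinuousLinearEquiv.coe_coe, conjCLE_apply, smul_eq_mul]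
  rw [clm_apply_eq (fderiv ℂ g t) Complex.I, clm_apply_eq (fderiv ℂ h t) Complex.I]
  rw [← deriv, ← deriv] -- hope: fderiv ℂ g t 1 = deriv g t  by definition? no
  set A := deriv g t; set B := deriv h t
  simp only [map_mul, Complex.conj_I]
  ring_nf
  simp [Complex.I_sq]
  ring


lemma wdbar_term (c : ℂ) (g h : ℂ → ℂ) (t : ℂ)
    (hg : DifferentiableAt ℂ g t) (hh : DifferentiableAt ℂ h t) :
    wdbar (fun s => c * (g s * (starRingEnd ℂ) (h s))) t
      = c * (g t * (starRingEnd ℂ) (deriv h t)) := by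
  have H := (hasFDerivAt_term c g h t hg hh).fderiv
  simp only [wdbar, H]
  simp only [ContinuousLinearMap.smul_apply, ContinuousLinearMap.add_apply,
    ContinuousLinearMap.comp_apply, ContinuousLinearMap.coe_restrictScalars',
    ContinuousLinearEquiv.coe_coe, conjCLE_apply, smul_eq_mul]
  rw [clm_apply_eq (fderiv ℂ g t) Complex.I, clm_apply_eq (fderiv ℂ h t) Complex.I]
  rw [← deriv, ← deriv]
  simp only [map_mul, Complex.conj_I]
  ring_nf
  simp [Complex.I_sq]
  ring

lemma wd_sum {n : ℕ} (c : Fin n → ℂ) (g h : Fin n → ℂ → ℂ) (t : ℂ)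
    (hg : ∀ i, DifferentiableAt ℂ (g i) t) (hh : ∀ i, DifferentiableAt ℂ (h i) t) :
    wd (fun s => ∑ i, c i * (g i s * (starRingEnd ℂ) (h i s))) t
      = ∑ i, c i * (deriv (g i) t * (starRingEnd ℂ) (h i t)) := by
  have H : HasFDerivAt (fun s => ∑ i : Fin n, c i * (g i s * (starRingEnd ℂ) (h i s)))
      (∑ i : Fin n, (c i • ((g i t • ((conjCLE : ℂ ≃L[ℝ] ℂ).toContinuousLinearMap ∘L
        ((fderiv ℂ (h i) t).restrictScalars ℝ))) +
        ((starRingEnd ℂ) (h i t) • ((fderiv ℂ (g i) t).restrictScalars ℝ))))) t :=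
    HasFDerivAt.fun_sum fun i _ => hasFDerivAt_term (c i) (g i) (h i) t (hg i) (hh i)
  simp only [wd, H.fderiv, ContinuousLinearMap.sum_apply]
  rw [Finset.mul_sum, ← Finset.sum_sub_distrib, Finset.sum_div]
  refine Finset.sum_congr rfl fun i _ => ?_
  have := wd_term (c i) (g i) (h i) t (hg i) (hh i)
  rw [wd] at this
  rw [(hasFDerivAt_term (c i) (g i) (h i) t (hg i) (hh i)).fderiv] at this
  exact this

lemma wdbar_sum {n : ℕ} (c : Fin n → ℂ) (g h : Fin n → ℂ → ℂ) (t : ℂ)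
    (hg : ∀ i, DifferentiableAt ℂ (g i) t) (hh : ∀ i, DifferentiableAt ℂ (h i) t) :
    wdbar (fun s => ∑ i, c i * (g i s * (starRingEnd ℂ) (h i s))) t
      = ∑ i, c i * (g i t * (starRingEnd ℂ) (deriv (h i) t)) := by
  have H : HasFDerivAt (fun s => ∑ i : Fin n, c i * (g i s * (starRingEnd ℂ) (h i s)))
      (∑ i : Fin n, (c i • ((g i t • ((conjCLE : ℂ ≃L[ℝ] ℂ).toContinuousLinearMap ∘L
        ((fderiv ℂ (h i) t).restrictScalars ℝ))) +
        ((starRingEnd ℂ) (h i t) • ((fderiv ℂ (g i) t).restrictScalars ℝ))))) t :=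
    HasFDerivAt.fun_sum fun i _ => hasFDerivAt_term (c i) (g i) (h i) t (hg i) (hh i)
  simp only [wdbar, H.fderiv, ContinuousLinearMap.sum_apply]
  rw [Finset.mul_sum, ← Finset.sum_add_distrib, Finset.sum_div]
  refine Finset.sum_congr rfl fun i _ => ?_
  have := wdbar_term (c i) (g i) (h i) t (hg i) (hh i)
  rw [wdbar] at this
  rw [(hasFDerivAt_term (c i) (g i) (h i) t (hg i) (hh i)).fderiv] at this
  exact this

lemma analyticAt_deriv {f : ℂ → ℂ} (hf : AnalyticAt ℂ f 0) : AnalyticAt ℂ (deriv f) 0 := by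
  obtain ⟨s, hs, h⟩ := hf.exists_mem_nhds_analyticOnNhd
  exact h.deriv _ (mem_of_mem_nhds hs)

lemma analyticAt_deriv_iter {f : ℂ → ℂ} (hf : AnalyticAt ℂ f 0) (n : ℕ) :
    AnalyticAt ℂ (deriv^[n] f) 0 := by
  induction n with
  | zero => exact hf
  | succ n ih => rw [Function.iterate_succ_apply']; exact analyticAt_deriv ih

lemma wd_congr_ev {A B : ℂ → ℂ} (h : A =ᶠ[𝓝 (0:ℂ)] B) : wd A =ᶠ[𝓝 (0:ℂ)] wd B := by
  filter_upwards [h.eventually_nhds] with t ht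
  simp only [wd, wdbar]
  rw [show fderiv ℝ A t = fderiv ℝ B t from Filter.EventuallyEq.fderiv_eq ht]

lemma wdbar_congr_ev {A B : ℂ → ℂ} (h : A =ᶠ[𝓝 (0:ℂ)] B) : wdbar A =ᶠ[𝓝 (0:ℂ)] wdbar B := by
  filter_upwards [h.eventually_nhds] with t ht
  simp only [wd, wdbar]
  rw [show fderiv ℝ A t = fderiv ℝ B t from Filter.EventuallyEq.fderiv_eq ht]

lemma wd_iter_congr (a : ℕ) {A B : ℂ → ℂ} (h : A =ᶠ[𝓝 (0:ℂ)] B) :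
    wd^[a] A =ᶠ[𝓝 (0:ℂ)] wd^[a] B := by
  induction a with
  | zero => exact h
  | succ a ih => rw [Function.iterate_succ_apply', Function.iterate_succ_apply']
                 exact wd_congr_ev ih

lemma wdbar_iter_congr (a : ℕ) {A B : ℂ → ℂ} (h : A =ᶠ[𝓝 (0:ℂ)] B) :
    wdbar^[a] A =ᶠ[𝓝 (0:ℂ)] wdbar^[a] B := by
  induction a with
  | zero => exact h
  | succ a ih => rw [Function.iterate_succ_apply', Function.iterate_succ_apply']
                 exact wdbar_congr_ev ih

lemma wd_iter_sum (a : ℕ) : ∀ {n : ℕ} (c : Fin n → ℂ) (g h : Fin n → ℂ → ℂ),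
    (∀ i, AnalyticAt ℂ (g i) 0) → (∀ i, AnalyticAt ℂ (h i) 0) →
    wd^[a] (fun s => ∑ i, c i * (g i s * (starRingEnd ℂ) (h i s))) =ᶠ[𝓝 (0:ℂ)]
      fun s => ∑ i, c i * (deriv^[a] (g i) s * (starRingEnd ℂ) (h i s)) := by
  induction a with
  | zero => intro n c g h _ _; simp
  | succ a ih =>
    intro n c g h hg hh
    rw [Function.iterate_succ_apply]
    have step : wd (fun s => ∑ i, c i * (g i s * (starRingEnd ℂ) (h i s))) =ᶠ[𝓝 (0:ℂ)]
        fun s => ∑ i, c i * (deriv (g i) s * (starRingEnd ℂ) (h i s)) := by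
      filter_upwards [eventually_all.2 fun i => (hg i).eventually_analyticAt,
        eventually_all.2 fun i => (hh i).eventually_analyticAt] with t htg hth
      exact wd_sum c g h t (fun i => (htg i).differentiableAt) fun i => (hth i).differentiableAt
    refine (wd_iter_congr a step).trans ?_
    have := ih c (fun i => deriv (g i)) h (fun i => analyticAt_deriv (hg i)) hh
    simpa only [← Function.iterate_succ_apply] using this

lemma wdbar_iter_sum (a : ℕ) : ∀ {n : ℕ} (c : Fin n → ℂ) (g h : Fin n → ℂ → ℂ),
    (∀ i, AnalyticAt ℂ (g i) 0) → (∀ i, AnalyticAt ℂ (h i) 0) →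
    wdbar^[a] (fun s => ∑ i, c i * (g i s * (starRingEnd ℂ) (h i s))) =ᶠ[𝓝 (0:ℂ)]
      fun s => ∑ i, c i * (g i s * (starRingEnd ℂ) (deriv^[a] (h i) s)) := by
  induction a with
  | zero => intro n c g h _ _; simp
  | succ a ih =>
    intro n c g h hg hh
    rw [Function.iterate_succ_apply]
    have step : wdbar (fun s => ∑ i, c i * (g i s * (starRingEnd ℂ) (h i s))) =ᶠ[𝓝 (0:ℂ)]
        fun s => ∑ i, c i * (g i s * (starRingEnd ℂ) (deriv (h i) s)) := by
      filter_upwards [eventually_all.2 fun i => (hg i).eventually_analyticAt,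
        eventually_all.2 fun i => (hh i).eventually_analyticAt] with t htg hth
      exact wdbar_sum c g h t (fun i => (htg i).differentiableAt) fun i => (hth i).differentiableAt
    refine (wdbar_iter_congr a step).trans ?_
    have := ih c g (fun i => deriv (h i)) hg (fun i => analyticAt_deriv (hh i))
    simpa only [← Function.iterate_succ_apply] using this

lemma Dab_master (a b : ℕ) {n : ℕ} (c : Fin n → ℂ) (g h : Fin n → ℂ → ℂ)
    (hg : ∀ i, AnalyticAt ℂ (g i) 0) (hh : ∀ i, AnalyticAt ℂ (h i) 0) :
    Dab a b (fun s => ∑ i, c i * (g i s * (starRingEnd ℂ) (h i s))) 0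
      = ∑ i, c i * (deriv^[a] (g i) 0 * (starRingEnd ℂ) (deriv^[b] (h i) 0)) := by
  have E1 := wdbar_iter_sum b c g h hg hh
  have E2 := wd_iter_congr a E1
  have E3 := wd_iter_sum a c g (fun i => deriv^[b] (h i)) hg
    (fun i => analyticAt_deriv_iter (hh i) b)
  exact (E2.trans E3).eq_of_nhds

-- iterated deriv of t^m * u t at 0
lemma iter_deriv_congr_zero {A B : ℂ → ℂ} (h : A =ᶠ[𝓝 (0:ℂ)] B) (n : ℕ) :
    deriv^[n] A 0 = deriv^[n] B 0 := by
  induction n generalizing A B with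
  | zero => exact h.eq_of_nhds
  | succ n ih =>
    rw [Function.iterate_succ_apply, Function.iterate_succ_apply]
    exact ih h.deriv

lemma deriv_pow_mul (m : ℕ) (u : ℂ → ℂ) (hu : AnalyticAt ℂ u 0) :
    deriv (fun t : ℂ => t ^ (m + 1) * u t) =ᶠ[𝓝 (0:ℂ)]
      fun t => t ^ m * (((m : ℂ) + 1) * u t + t * deriv u t) := by
  filter_upwards [hu.eventually_analyticAt] with t ht
  rw [deriv_fun_mul (differentiableAt_pow _) ht.differentiableAt, deriv_pow_field]
  push_cast
  ring

lemma iter_deriv_pow_mul_self (n : ℕ) : ∀ (u : ℂ → ℂ), AnalyticAt ℂ u 0 →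
    deriv^[n] (fun t : ℂ => t ^ n * u t) 0 = (n.factorial : ℂ) * u 0 := by
  induction n with
  | zero => intro u _; simp
  | succ n ih =>
    intro u hu
    rw [Function.iterate_succ_apply]
    rw [iter_deriv_congr_zero (deriv_pow_mul n u hu) n]
    rw [ih (fun t => ((n : ℂ) + 1) * u t + t * deriv u t)
      (((analyticAt_const.mul hu).add ((analyticAt_id).mul (analyticAt_deriv hu))))]
    simp only [Nat.factorial_succ]
    push_cast
    ring

lemma iter_deriv_pow_mul_lt : ∀ (n m : ℕ) (u : ℂ → ℂ), AnalyticAt ℂ u 0 → n < m →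
    deriv^[n] (fun t : ℂ => t ^ m * u t) 0 = 0 := by
  intro n
  induction n with
  | zero =>
    intro m u _ hm
    simp [zero_pow]; omega
  | succ n ih =>
    intro m u hu hm
    obtain ⟨k, rfl⟩ : ∃ k, m = k + 1 := ⟨m - 1, by omega⟩
    rw [Function.iterate_succ_apply]
    rw [iter_deriv_congr_zero (deriv_pow_mul k u hu) n]
    exact ih k (fun t => ((k : ℂ) + 1) * u t + t * deriv u t)
      (((analyticAt_const.mul hu).add ((analyticAt_id).mul (analyticAt_deriv hu))))
      (by omega)

lemma rDef_cast (z₂ z₃ : ℂ) :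
    ((rDef 0 z₂ z₃ : ℝ) : ℂ) =
      (1/2) * (z₂^3 * (starRingEnd ℂ) z₂) + (1/2) * (z₂ * (starRingEnd ℂ) (z₂^3))
      + (-(1/2)) * ((z₂ * z₃^3) * (starRingEnd ℂ) z₂)
      + (-(1/2)) * (z₂ * (starRingEnd ℂ) (z₂ * z₃^3))
      + (1/2) * (z₃^3 * (starRingEnd ℂ) z₃) + (1/2) * (z₃ * (starRingEnd ℂ) (z₃^3))
      + (-(1/2)) * (z₂^2 * (starRingEnd ℂ) z₃) + (-(1/2)) * (z₃ * (starRingEnd ℂ) (z₂^2)) := by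
  have hre : ∀ w : ℂ, ((w.re : ℝ) : ℂ) = (w + (starRingEnd ℂ) w)/2 := fun w => by
    rw [Complex.add_conj]; push_cast; ring
  have hns : ∀ z : ℂ, ((‖z‖ : ℝ) : ℂ)^2 = z * (starRingEnd ℂ) z := fun z => by
    rw [← Complex.mul_conj']
  simp only [rDef]
  push_cast
  rw [hre, hre, hre, hre, hns, hns]
  simp only [map_sub, map_add, map_pow, map_mul, map_zero, Complex.conj_conj]
  ring

/-- If γ = (0,γ²,γ³) is holomorphic with γ(0)=0, (γ²)'(0)≠0 and (γ³)'(0)=0, then the coefficient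
of t³t̄ (i.e. D^{3,1}[r∘γ](0)) is nonzero; in particular r∘γ vanishes to order at most 4 at 0. -/

theorem stmt3 (γ₂ γ₃ : ℂ → ℂ) (h₂ : AnalyticAt ℂ γ₂ 0) (h₃ : AnalyticAt ℂ γ₃ 0)
    (h₂0 : γ₂ 0 = 0) (h₃0 : γ₃ 0 = 0) (h₂' : deriv γ₂ 0 ≠ 0) (h₃' : deriv γ₃ 0 = 0) :
    Dab 3 1 (fun t => ((rDef 0 (γ₂ t) (γ₃ t) : ℝ) : ℂ)) 0 ≠ 0 ∧
    (∃ a b : ℕ, a + b ≤ 4 ∧ Dab a b (fun t => ((rDef 0 (γ₂ t) (γ₃ t) : ℝ) : ℂ)) 0 ≠ 0) := by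
  set a := deriv γ₂ 0 with ha
  have d2 : DifferentiableAt ℂ γ₂ 0 := h₂.differentiableAt
  have d3 : DifferentiableAt ℂ γ₃ 0 := h₃.differentiableAt
  -- the eight-term decomposition
  set c : Fin 8 → ℂ := ![1/2, 1/2, -(1/2), -(1/2), 1/2, 1/2, -(1/2), -(1/2)] with hc
  set g : Fin 8 → ℂ → ℂ :=
    ![fun t => γ₂ t^3, γ₂, fun t => γ₂ t * γ₃ t^3, γ₂,
      fun t => γ₃ t^3, γ₃, fun t => γ₂ t^2, γ₃] with hgdef
  set h : Fin 8 → ℂ → ℂ :=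
    ![γ₂, fun t => γ₂ t^3, γ₂, fun t => γ₂ t * γ₃ t^3,
      γ₃, fun t => γ₃ t^3, γ₃, fun t => γ₂ t^2] with hhdef
  have hg : ∀ i, AnalyticAt ℂ (g i) 0 := by
    intro i
    fin_cases i <;> simp only [hgdef, Matrix.cons_val_zero, Matrix.cons_val_one, Matrix.head_cons,
      Matrix.cons_val_two, Matrix.cons_val_three, Matrix.cons_val_four, Matrix.tail_cons] <;>
    first
      | exact h₂.pow 3
      | exact h₂
      | exact h₂.mul (h₃.pow 3)
      | exact h₃.pow 3
      | exact h₃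
      | exact h₂.pow 2
  have hh : ∀ i, AnalyticAt ℂ (h i) 0 := by
    intro i
    fin_cases i <;> simp only [hhdef, Matrix.cons_val_zero, Matrix.cons_val_one, Matrix.head_cons,
      Matrix.cons_val_two, Matrix.cons_val_three, Matrix.cons_val_four, Matrix.tail_cons] <;>
    first
      | exact h₂.pow 3
      | exact h₂
      | exact h₂.mul (h₃.pow 3)
      | exact h₃.pow 3
      | exact h₃
      | exact h₂.pow 2
  have hfeq : (fun t => ((rDef 0 (γ₂ t) (γ₃ t) : ℝ) : ℂ))
      = fun t => ∑ i, c i * (g i t * (starRingEnd ℂ) (h i t)) := by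
    funext t
    rw [rDef_cast (γ₂ t) (γ₃ t)]
    simp [hc, hgdef, hhdef, Fin.sum_univ_succ, Matrix.cons_val_zero, Matrix.cons_val_succ]
    ring
  -- first derivatives of the h-side factors
  have e1 : deriv (fun t => γ₂ t ^ 3) 0 = 0 := by
    rw [((d2.hasDerivAt.fun_pow 3)).deriv]; simp [h₂0]
  have e2 : deriv (fun t => γ₂ t * γ₃ t ^ 3) 0 = 0 := by
    rw [(d2.hasDerivAt.fun_mul (d3.hasDerivAt.fun_pow 3)).deriv]; simp [h₂0, h₃0]
  have e3 : deriv (fun t => γ₃ t ^ 3) 0 = 0 := by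
    rw [((d3.hasDerivAt.fun_pow 3)).deriv]; simp [h₃0]
  have e4 : deriv (fun t => γ₂ t ^ 2) 0 = 0 := by
    rw [((d2.hasDerivAt.fun_pow 2)).deriv]; simp [h₂0]
  -- factorizations via dslope
  have hu : AnalyticAt ℂ (dslope γ₂ 0) 0 := by
    obtain ⟨p, hp⟩ := h₂; exact ⟨p.fslope, hp.has_fpower_series_dslope_fslope⟩
  have hv : AnalyticAt ℂ (dslope γ₃ 0) 0 := by
    obtain ⟨p, hp⟩ := h₃; exact ⟨p.fslope, hp.has_fpower_series_dslope_fslope⟩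
  have hw : AnalyticAt ℂ (dslope (dslope γ₃ 0) 0) 0 := by
    obtain ⟨p, hp⟩ := hv; exact ⟨p.fslope, hp.has_fpower_series_dslope_fslope⟩
  have hfac2 : ∀ t, γ₂ t = t * dslope γ₂ 0 t := by
    intro t
    have := sub_smul_dslope γ₂ 0 t
    simp [h₂0] at this
    simp [← this]
  have hfac3 : ∀ t, γ₃ t = t^2 * dslope (dslope γ₃ 0) 0 t := by
    intro t
    have H1 := sub_smul_dslope γ₃ 0 t
    have H2 := sub_smul_dslope (dslope γ₃ 0) 0 t
    simp [h₃0, dslope_same, h₃'] at H1 H2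
    rw [← H1, ← H2]; ring
  have E1 : deriv^[3] (fun t => γ₂ t ^ 3) 0 = 6 * a^3 := by
    have : (fun t => γ₂ t ^ 3) = fun t : ℂ => t^3 * (dslope γ₂ 0 t)^3 := by
      funext t; rw [hfac2 t]; ring
    rw [this, iter_deriv_pow_mul_self 3 (fun t => (dslope γ₂ 0 t)^3) (hu.pow 3)]
    rw [dslope_same, ← ha]
    norm_num [Nat.factorial]
  have E2 : deriv^[3] (fun t => γ₂ t * γ₃ t ^ 3) 0 = 0 := by
    have : (fun t => γ₂ t * γ₃ t ^ 3)
        = fun t : ℂ => t^7 * (dslope γ₂ 0 t * (dslope (dslope γ₃ 0) 0 t)^3) := by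
      funext t; rw [hfac2 t, hfac3 t]; ring
    rw [this]
    exact iter_deriv_pow_mul_lt 3 7 _ (hu.mul (hw.pow 3)) (by norm_num)
  have key : Dab 3 1 (fun t => ((rDef 0 (γ₂ t) (γ₃ t) : ℝ) : ℂ)) 0 = 3 * a^3 * (starRingEnd ℂ) a := by
    rw [hfeq, Dab_master 3 1 c g h hg hh]
    simp only [Function.iterate_one]
    simp [hc, hgdef, hhdef, Fin.sum_univ_succ, Matrix.cons_val_zero, Matrix.cons_val_succ]
    have E1' : deriv (deriv (deriv (fun t => γ₂ t ^ 3))) 0 = 6 * a ^ 3 := E1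
    have E2' : deriv (deriv (deriv (fun t => γ₂ t * γ₃ t ^ 3))) 0 = 0 := E2
    rw [E1', E2', e1, e2, e3, e4, h₃', ← ha]
    simp only [map_zero]
    ring
  have hane : (3 : ℂ) * a^3 * (starRingEnd ℂ) a ≠ 0 := by
    have h1 : (starRingEnd ℂ) a ≠ 0 := by
      simpa using h₂'
    have h2 : a^3 ≠ 0 := pow_ne_zero 3 h₂'
    have h3 : (3:ℂ) ≠ 0 := by norm_num
    exact mul_ne_zero (mul_ne_zero h3 h2) h1
  constructor
  · rw [key]; exact hane
  · exact ⟨3, 1, by norm_num, by rw [key]; exact hane⟩
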